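/- Let Ω be a Cantor group and T : Ω → Ω a minimal translation. Then the set 𝔑 = {f ∈ C(Ω,ℝ) : for every ω ∈ Ω the spectrum of H_ω has empty interior} is a G_δ subset of C(Ω,ℝ). -/

import Mathlib

open Filter Set
open scoped ENNReal Topology Uniformity

noncomputable section

namespace Statement5Aux

abbrev E := lp (fun _ : ℤ => ℝ) 2
abbrev A := E →L[ℝ] E

lemma two_toReal : (2 : ℝ≥0∞).toReal = 2 := by norm_num

lemma norm_le_of_coord {c : ℤ → ℝ} {C : ℝ} (hC : 0 ≤ C) (hc : ∀ m, |c m| ≤ C)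
    (ψ φ : E) (hφ : ∀ m, φ m = c m * ψ m) : ‖φ‖ ≤ C * ‖ψ‖ := by
  have hp : 0 < (2 : ℝ≥0∞).toReal := by norm_num
  refine lp.norm_le_of_forall_sum_le hp (by positivity) (fun s => ?_)
  have h1 : ∀ i, ‖φ i‖ ^ (2 : ℝ≥0∞).toReal
      ≤ C ^ (2 : ℝ≥0∞).toReal * ‖ψ i‖ ^ (2 : ℝ≥0∞).toReal := by
    intro i
    rw [← Real.mul_rpow hC (norm_nonneg _)]
    refine Real.rpow_le_rpow (norm_nonneg _) ?_ (by norm_num)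
    rw [hφ i, Real.norm_eq_abs, abs_mul]
    exact mul_le_mul_of_nonneg_right (hc i) (abs_nonneg _)
  calc ∑ i ∈ s, ‖φ i‖ ^ (2 : ℝ≥0∞).toReal
      ≤ ∑ i ∈ s, C ^ (2 : ℝ≥0∞).toReal * ‖ψ i‖ ^ (2 : ℝ≥0∞).toReal :=
        Finset.sum_le_sum (fun i _ => h1 i)
    _ = C ^ (2 : ℝ≥0∞).toReal * ∑ i ∈ s, ‖ψ i‖ ^ (2 : ℝ≥0∞).toReal := by
        rw [Finset.mul_sum]
    _ ≤ C ^ (2 : ℝ≥0∞).toReal * ‖ψ‖ ^ (2 : ℝ≥0∞).toReal :=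
        mul_le_mul_of_nonneg_left (lp.sum_rpow_le_norm_rpow hp ψ s)
          (Real.rpow_nonneg hC _)
    _ = (C * ‖ψ‖) ^ (2 : ℝ≥0∞).toReal := (Real.mul_rpow hC (norm_nonneg _)).symm

lemma memℓp_mul {c : ℤ → ℝ} {C : ℝ} (hC : 0 ≤ C) (hc : ∀ m, |c m| ≤ C) (ψ : E) :
    Memℓp (fun m => c m * ψ m) 2 := by
  apply memℓp_gen
  have hp : 0 < (2 : ℝ≥0∞).toReal := by norm_num
  have hsum := ((lp.memℓp ψ).summable hp).mul_left (C ^ (2 : ℝ≥0∞).toReal)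
  refine Summable.of_nonneg_of_le (fun i => Real.rpow_nonneg (norm_nonneg _) _)
    (fun i => ?_) hsum
  rw [← Real.mul_rpow hC (norm_nonneg _)]
  refine Real.rpow_le_rpow (norm_nonneg _) ?_ (by norm_num)
  rw [Real.norm_eq_abs, abs_mul]
  exact mul_le_mul_of_nonneg_right (hc i) (abs_nonneg _)

/-- the multiplication operator by a bounded sequence -/
def mulOp {c : ℤ → ℝ} {C : ℝ} (hC : 0 ≤ C) (hc : ∀ m, |c m| ≤ C) : A :=
  LinearMap.mkContinuous
    { toFun := fun ψ => (⟨fun m => c m * ψ m, memℓp_mul hC hc ψ⟩ : E)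
      map_add' := by
        intro ψ φ
        apply lp.ext
        funext m
        simp only [lp.coeFn_add, Pi.add_apply]
        change c m * (ψ + φ) m = c m * ψ m + c m * φ m
        rw [lp.coeFn_add, Pi.add_apply]
        ring
      map_smul' := by
        intro r ψ
        apply lp.ext
        funext m
        change c m * (r • ψ) m = (r • _ : E) m
        rw [lp.coeFn_smul, Pi.smul_apply, lp.coeFn_smul, Pi.smul_apply]
        change c m * (r * ψ m) = r * (c m * ψ m)
        ring } C
    (fun ψ => norm_le_of_coord hC hc ψ _ (fun _ => rfl))

lemma mulOp_apply {c : ℤ → ℝ} {C : ℝ} (hC : 0 ≤ C) (hc : ∀ m, |c m| ≤ C)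
    (ψ : E) (m : ℤ) : mulOp hC hc ψ m = c m * ψ m := rfl

lemma opnorm_le {D : A} {c : ℤ → ℝ} {C : ℝ} (hC : 0 ≤ C) (hc : ∀ m, |c m| ≤ C)
    (hD : ∀ ψ : E, ∀ m, D ψ m = c m * ψ m) : ‖D‖ ≤ C :=
  D.opNorm_le_bound hC (fun ψ => norm_le_of_coord hC hc ψ (D ψ) (fun m => hD ψ m))

end Statement5Aux

open Statement5Aux

/-- For a Cantor group `Ω` and a minimal translation `T ω = ω + α`,
the set `𝔑` of sampling functions `f ∈ C(Ω,ℝ)` such that for every `ω ∈ Ω` the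
spectrum of the Schrödinger operator `H_ω` with potential `n ↦ f(Tⁿ ω) = f(ω + n • α)`
has empty interior is a `G_δ` subset of `C(Ω,ℝ)`. -/
theorem statement5
    (Ω : Type*) [TopologicalSpace Ω] [AddCommGroup Ω] [IsTopologicalAddGroup Ω]
    [CompactSpace Ω] [TotallyDisconnectedSpace Ω] [PerfectSpace Ω] [T2Space Ω]
    (T : Ω → Ω) (α : Ω) (hT : ∀ ω, T ω = ω + α)
    (hMin : ∀ ω : Ω, Dense {ω' : Ω | ∃ n : ℤ, ω' = ω + n • α}) :
    IsGδ {f : C(Ω, ℝ) |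
      ∀ ω : Ω, ∀ H : lp (fun _ : ℤ => ℝ) 2 →L[ℝ] lp (fun _ : ℤ => ℝ) 2,
        (∀ ψ : lp (fun _ : ℤ => ℝ) 2, ∀ n : ℤ,
            H ψ n = ψ (n + 1) + ψ (n - 1) + f (ω + n • α) * ψ n) →
        interior (spectrum ℝ H) = ∅} := by
  classical
  letI : UniformSpace Ω := IsTopologicalAddGroup.rightUniformSpace Ω
  set P : C(Ω, ℝ) → Ω → A → Prop := fun f ω H =>
    ∀ ψ : E, ∀ n : ℤ, H ψ n = ψ (n + 1) + ψ (n - 1) + f (ω + n • α) * ψ n with hP_def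
  -- the decomposition into countably many open pieces
  have key : {f : C(Ω, ℝ) |
      ∀ ω : Ω, ∀ H : A, P f ω H → interior (spectrum ℝ H) = ∅}
      = ⋂ p : ℚ × ℚ, {f : C(Ω, ℝ) | (p.1 : ℝ) < (p.2 : ℝ) →
          ∀ ω : Ω, ∀ H : A, P f ω H → ¬ Ioo (p.1 : ℝ) (p.2 : ℝ) ⊆ spectrum ℝ H} := by
    ext f
    simp only [Set.mem_setOf_eq, Set.mem_iInter]
    constructor
    · intro hf p hpq ω H hPH hsub
      have h1 : Ioo (p.1 : ℝ) (p.2 : ℝ) ⊆ interior (spectrum ℝ H) :=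
        (isOpen_Ioo.subset_interior_iff).mpr hsub
      rw [hf ω H hPH] at h1
      exact (Set.nonempty_Ioo.mpr hpq).ne_empty (Set.subset_empty_iff.mp h1)
    · intro hf ω H hPH
      rcases Set.eq_empty_or_nonempty (interior (spectrum ℝ H)) with h | ⟨x, hx⟩
      · exact h
      exfalso
      obtain ⟨ε, hε, hball⟩ := Metric.isOpen_iff.mp isOpen_interior x hx
      obtain ⟨q, hq1, hq2⟩ := exists_rat_btwn (show x - ε < x by linarith)
      obtain ⟨r, hr1, hr2⟩ := exists_rat_btwn (show x < x + ε by linarith)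
      refine hf (q, r) (hq2.trans hr1) ω H hPH (fun y hy => ?_)
      refine interior_subset (hball ?_)
      rw [Metric.mem_ball, Real.dist_eq, abs_sub_lt_iff]
      obtain ⟨hy1, hy2⟩ := hy
      constructor <;> linarith
  rw [key]
  refine IsGδ.iInter (fun p => IsOpen.isGδ ?_)
  by_cases hpq : (p.1 : ℝ) < (p.2 : ℝ)
  · -- the complement is sequentially closed
    have hcompl : {f : C(Ω, ℝ) | (p.1 : ℝ) < (p.2 : ℝ) →
          ∀ ω : Ω, ∀ H : A, P f ω H → ¬ Ioo (p.1 : ℝ) (p.2 : ℝ) ⊆ spectrum ℝ H}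
        = {f : C(Ω, ℝ) |
            ∃ ω : Ω, ∃ H : A, P f ω H ∧ Ioo (p.1 : ℝ) (p.2 : ℝ) ⊆ spectrum ℝ H}ᶜ := by
      ext f
      simp only [Set.mem_setOf_eq, Set.mem_compl_iff, not_exists, not_and]
      constructor
      · intro h ω H hPH hsub
        exact h hpq ω H hPH hsub
      · intro h _ ω H hPH
        exact h ω H hPH
    rw [hcompl]
    refine isOpen_compl_iff.mpr (IsSeqClosed.isClosed ?_)
    rintro g f hg htends
    choose ωs Hs hP hspec using hg
    -- choose an ultrafilter refining `atTop` and a limit point of the `ωs`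
    set 𝒰 : Ultrafilter ℕ := Ultrafilter.of atTop with h𝒰
    have h𝒰le : (𝒰 : Filter ℕ) ≤ atTop := Ultrafilter.of_le atTop
    obtain ⟨ω, hω⟩ := isCompact_univ.ultrafilter_le_nhds (𝒰.map ωs)
      (by simp [Filter.le_principal_iff, Filter.univ_mem])
    have hωtends : Tendsto ωs 𝒰 (𝓝 ω) := hω.2
    -- construct the operator `H` for `(f, ω)` from `Hs 0`
    set c0 : ℤ → ℝ := fun m => f (ω + m • α) - g 0 (ωs 0 + m • α) with hc0_def
    have hC0 : (0 : ℝ) ≤ ‖f‖ + ‖g 0‖ := by positivity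
    have hc0 : ∀ m, |c0 m| ≤ ‖f‖ + ‖g 0‖ := by
      intro m
      refine (abs_sub _ _).trans (add_le_add ?_ ?_)
      · exact (f.norm_coe_le_norm _)
      · exact ((g 0).norm_coe_le_norm _)
    set H : A := Hs 0 + mulOp hC0 hc0 with hH_def
    have hPH : P f ω H := by
      intro ψ n
      have h1 : H ψ n = Hs 0 ψ n + mulOp hC0 hc0 ψ n := by
        rw [hH_def, ContinuousLinearMap.add_apply, lp.coeFn_add, Pi.add_apply]
      rw [h1, hP 0 ψ n, mulOp_apply hC0 hc0 ψ n, hc0_def]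
      ring
    refine ⟨ω, H, hPH, fun x hx => ?_⟩
    by_contra hx'
    rw [spectrum.mem_iff, not_not] at hx'
    obtain ⟨ε, hε, hball⟩ :=
      Metric.isOpen_iff.mp Units.isOpen _ hx'
    -- uniform continuity of f
    have huc : UniformContinuous (f : Ω → ℝ) :=
      CompactSpace.uniformContinuous_of_continuous f.continuous
    have hεpos : (0 : ℝ) < ε / 3 := by linarith
    have hent : {q : Ω × Ω | dist (f q.1) (f q.2) < ε / 3} ∈ 𝓤 Ω := by
      have := Filter.mem_map.mp
        (huc (Metric.dist_mem_uniformity hεpos))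
      exact this
    rw [uniformity_eq_comap_nhds_zero'] at hent
    obtain ⟨s, hs, hsub⟩ := Filter.mem_comap.mp hent
    -- eventually facts along the ultrafilter
    have htend0 : Tendsto (fun n => ωs n - ω) 𝒰 (𝓝 0) := by
      have := hωtends.sub_const ω
      rwa [sub_self] at this
    have hev1 : ∀ᶠ n in (𝒰 : Filter ℕ), (ωs n - ω) ∈ s := htend0 hs
    have hev2 : ∀ᶠ n in (𝒰 : Filter ℕ), ‖g n - f‖ < ε / 3 := by
      refine h𝒰le ?_
      have : ∀ᶠ n in atTop, g n ∈ Metric.ball f (ε / 3) :=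
        htends (Metric.ball_mem_nhds f hεpos)
      filter_upwards [this] with n hn
      rw [Metric.mem_ball, dist_eq_norm] at hn
      exact hn
    obtain ⟨n, hn1, hn2⟩ := (hev1.and hev2).exists
    -- the difference `Hs n - H` is multiplication by a small sequence
    set cn : ℤ → ℝ := fun m => g n (ωs n + m • α) - f (ω + m • α) with hcn_def
    have hcn : ∀ m, |cn m| ≤ ε / 3 + ε / 3 := by
      intro m
      have h1 : |g n (ωs n + m • α) - f (ωs n + m • α)| ≤ ε / 3 := by
        calc |g n (ωs n + m • α) - f (ωs n + m • α)|
            = ‖(g n - f) (ωs n + m • α)‖ := by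
              rw [ContinuousMap.sub_apply, Real.norm_eq_abs]
          _ ≤ ‖g n - f‖ := (g n - f).norm_coe_le_norm _
          _ ≤ ε / 3 := le_of_lt hn2
      have h2 : |f (ωs n + m • α) - f (ω + m • α)| ≤ ε / 3 := by
        have hmem : ((ω + m • α, ωs n + m • α) : Ω × Ω) ∈
            (fun q : Ω × Ω => q.2 - q.1) ⁻¹' s := by
          simp only [Set.mem_preimage]
          have : ωs n + m • α - (ω + m • α) = ωs n - ω := by abel
          rw [this]
          exact hn1
        have := hsub (show (ω + m • α, ωs n + m • α) ∈ (fun p : Ω × Ω => p.2 + -p.1) ⁻¹' s by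
          simpa only [Set.mem_preimage, sub_eq_add_neg] using hmem)
        simp only [Set.mem_setOf_eq] at this
        rw [Real.dist_eq] at this
        rw [abs_sub_comm]
        exact le_of_lt this
      calc |cn m| = |(g n (ωs n + m • α) - f (ωs n + m • α))
            + (f (ωs n + m • α) - f (ω + m • α))| := by rw [hcn_def]; ring_nf
        _ ≤ _ := (abs_add_le _ _).trans (add_le_add h1 h2)
    have hD : ∀ ψ : E, ∀ m, (Hs n - H) ψ m = cn m * ψ m := by
      intro ψ m
      have h1 : (Hs n - H) ψ m = Hs n ψ m - H ψ m := by
        rw [ContinuousLinearMap.sub_apply, lp.coeFn_sub, Pi.sub_apply]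
      rw [h1, hP n ψ m, hPH ψ m, hcn_def]
      ring
    have hnorm : ‖Hs n - H‖ ≤ ε / 3 + ε / 3 :=
      opnorm_le (by positivity) hcn hD
    -- conclude: `x` is not in the spectrum of `Hs n`, contradiction
    have hmem : (algebraMap ℝ A) x - Hs n ∈ Metric.ball ((algebraMap ℝ A) x - H) ε := by
      rw [Metric.mem_ball, dist_eq_norm]
      have : (algebraMap ℝ A) x - Hs n - ((algebraMap ℝ A) x - H) = -(Hs n - H) := by
        abel
      rw [this, norm_neg]
      calc ‖Hs n - H‖ ≤ ε / 3 + ε / 3 := hnorm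
        _ < ε := by linarith
    have hx'' : IsUnit ((algebraMap ℝ A) x - Hs n) := hball hmem
    exact (spectrum.mem_iff.mp (hspec n hx)) hx''
  · -- the interval is empty: the set is everything
    have : {f : C(Ω, ℝ) | (p.1 : ℝ) < (p.2 : ℝ) →
          ∀ ω : Ω, ∀ H : A, P f ω H → ¬ Ioo (p.1 : ℝ) (p.2 : ℝ) ⊆ spectrum ℝ H}
        = Set.univ := by
      ext f
      simp only [Set.mem_setOf_eq, Set.mem_univ, iff_true]
      intro h
      exact absurd h hpq
    rw [this]
    exact isOpen_univ
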